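/- Let A be a reduced commutative ring, K its total ring of fractions (the localization of A at the multiplicative set of nonzerodivisors), and B the integral closure of A in K, so that the natural map A → B is injective. Let J := {a ∈ A : a·x lies in the image of A for every x ∈ B} be the conductor ideal. Then the ideal of B generated by the image of J equals the image of J (i.e., J is also an ideal of B), and the natural ring homomorphism A → (A/J) ×_{B/(J·B)} B, sending a to (a mod J, a), is an isomorphism, where the fiber product is taken with respect to the induced map A/J → B/(J·B) and the quotient map B → B/(J·B). -/

import Mathlib

/-- The fiber product ring `R ×_T S` of two ring homomorphisms `u : R →+* T` and
`v : S →+* T`, realized as the subring `{(r, s) | u r = v s}` of `R × S`. -/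
def fiberProd {R S T : Type*} [CommRing R] [CommRing S] [CommRing T]
    (u : R →+* T) (v : S →+* T) : Subring (R × S) :=
  RingHom.eqLocus (u.comp (RingHom.fst R S)) (v.comp (RingHom.snd R S))

/-- The conductor ideal `{a ∈ A | φ(a) · x ∈ im φ for all x ∈ B}` of a ring
homomorphism `φ : A →+* B`. -/
def conductorIdeal {A B : Type*} [CommRing A] [CommRing B] (φ : A →+* B) : Ideal A where
  carrier := {a | ∀ x : B, φ a * x ∈ φ.range}
  zero_mem' := by
    simp only [Set.mem_setOf_eq]
    intro x
    rw [map_zero, zero_mul]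
    exact zero_mem _
  add_mem' := by
    intro a b ha hb x
    have h : φ (a + b) * x = φ a * x + φ b * x := by rw [map_add, add_mul]
    rw [h]
    exact add_mem (ha x) (hb x)
  smul_mem' := by
    intro c a ha x
    have h : φ (c • a) * x = φ a * (φ c * x) := by
      simp only [smul_eq_mul, map_mul]; ring
    rw [h]
    exact ha (φ c * x)

set_option maxHeartbeats 1000000 in
set_option synthInstance.maxHeartbeats 400000 in
theorem stmt7 (A : Type*) [CommRing A] [IsReduced A] :
    -- `B` is the integral closure of `A` in its total ring of fractions,
    -- `φ : A → B` the natural (injective) map, and `J` the conductor ideal.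
    letI K := FractionRing A;
    letI B := integralClosure A K;
    letI φ : A →+* ↥B := algebraMap A ↥B;
    letI J : Ideal A := conductorIdeal φ;
    -- `J` is also an ideal of `B`: the ideal generated by `φ(J)` is just the set `φ(J)`
    ((Ideal.map φ J : Ideal ↥B) : Set ↥B) = ⇑φ '' (J : Set A) ∧
    -- and the natural map `A → (A/J) ×_{B/(J·B)} B` is an isomorphism
    ∃ e : A ≃+* ↥(fiberProd (T := ↥B ⧸ Ideal.map φ J)
        (Ideal.quotientMap (Ideal.map φ J) φ Ideal.le_comap_map)
        (Ideal.Quotient.mk (Ideal.map φ J))),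
      ∀ a : A, (e a).val = (Ideal.Quotient.mk J a, φ a) := by
  let K := FractionRing A
  let B := integralClosure A K
  let φ : A →+* ↥B := algebraMap A ↥B
  let J : Ideal A := conductorIdeal φ
  show ((Ideal.map φ J : Ideal ↥B) : Set ↥B) = ⇑φ '' (J : Set A) ∧
    ∃ e : A ≃+* ↥(fiberProd (T := ↥B ⧸ Ideal.map φ J)
        (Ideal.quotientMap (Ideal.map φ J) φ Ideal.le_comap_map)
        (Ideal.Quotient.mk (Ideal.map φ J))),
      ∀ a : A, (e a).val = (Ideal.Quotient.mk J a, φ a)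
  have hinj : Function.Injective φ := by
    intro a b h
    have hK : Function.Injective (algebraMap A K) := IsFractionRing.injective A K
    apply hK
    exact congrArg Subtype.val h
  -- The ideal of B with carrier φ '' J
  have hI : ∀ (c : ↥B) {a : A}, a ∈ J → ∃ d : A, d ∈ J ∧ φ d = c * φ a := by
    intro c a ha
    obtain ⟨d, hd⟩ := ha c
    refine ⟨d, ?_, by rw [hd]; ring⟩
    intro y
    have : φ d * y = φ a * (c * y) := by rw [hd]; ring
    rw [this]
    exact ha (c * y)
  let I : Ideal ↥B :=
  { carrier := ⇑φ '' (J : Set A)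
    zero_mem' := ⟨0, J.zero_mem, map_zero φ⟩
    add_mem' := by
      rintro _ _ ⟨a, ha, rfl⟩ ⟨b, hb, rfl⟩
      exact ⟨a + b, J.add_mem ha hb, map_add φ a b⟩
    smul_mem' := by
      rintro c _ ⟨a, ha, rfl⟩
      obtain ⟨d, hd, hdeq⟩ := hI c ha
      exact ⟨d, hd, hdeq⟩ }
  have hset : ((Ideal.map φ J : Ideal ↥B) : Set ↥B) = ⇑φ '' (J : Set A) := by
    apply subset_antisymm
    · have : Ideal.map φ J ≤ I := by
        rw [Ideal.map_le_iff_le_comap]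
        intro a ha
        show φ a ∈ ⇑φ '' (J : Set A)
        exact ⟨a, ha, rfl⟩
      exact fun x hx => this hx
    · rintro _ ⟨a, ha, rfl⟩
      exact Ideal.mem_map_of_mem φ ha
  refine ⟨hset, ?_⟩
  set FP := fiberProd (T := ↥B ⧸ Ideal.map φ J)
      (Ideal.quotientMap (Ideal.map φ J) φ Ideal.le_comap_map)
      (Ideal.Quotient.mk (Ideal.map φ J)) with hFP
  let ψ : A →+* ↥FP :=
    RingHom.codRestrict ((Ideal.Quotient.mk J).prod φ) FP (by
      intro a
      show Ideal.quotientMap (Ideal.map φ J) φ Ideal.le_comap_map (Ideal.Quotient.mk J a)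
        = Ideal.Quotient.mk (Ideal.map φ J) (φ a)
      exact Ideal.quotientMap_mk)
  have hbij : Function.Bijective ψ := by
    constructor
    · intro a b h
      apply hinj
      exact congrArg (fun x : ↥FP => x.val.2) h
    · rintro ⟨⟨q, b⟩, hqb⟩
      obtain ⟨a, rfl⟩ := Ideal.Quotient.mk_surjective q
      have hqb' : Ideal.Quotient.mk (Ideal.map φ J) (φ a)
          = Ideal.Quotient.mk (Ideal.map φ J) b := by
        have : Ideal.quotientMap (Ideal.map φ J) φ Ideal.le_comap_map (Ideal.Quotient.mk J a)
            = Ideal.Quotient.mk (Ideal.map φ J) b := hqb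
        rwa [Ideal.quotientMap_mk] at this
      have hmem : b - φ a ∈ Ideal.map φ J := by
        rw [Ideal.Quotient.eq] at hqb'
        simpa using (Ideal.map φ J).neg_mem hqb'
      have : b - φ a ∈ (⇑φ '' (J : Set A)) := hset ▸ hmem
      obtain ⟨j, hj, hjeq⟩ := this
      refine ⟨a + j, ?_⟩
      apply Subtype.ext
      show (Ideal.Quotient.mk J (a + j), φ (a + j)) = (Ideal.Quotient.mk J a, b)
      refine Prod.ext ?_ ?_
      · rw [map_add, Ideal.Quotient.eq_zero_iff_mem.mpr hj, add_zero]
      · show φ (a + j) = b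
        rw [map_add, hjeq]; ring
  exact ⟨RingEquiv.ofBijective ψ hbij, fun a => rfl⟩
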